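/- arXiv:2104.14625 — 4 statements merged into one kernel-verified Lean document; each statement's English description precedes it below -/
import Mathlib

section
/- Let G be a finite group and Λ a group on which G acts by automorphisms. Suppose Λ admits a subgroup Θ of finite index that is a finitely generated abelian group. Then the first nonabelian cohomology set H^1(G, Λ) is finite. -/
lemma my_subgroup_fg {M : Type*} [CommGroup M] (hM : Group.FG M) (H : Subgroup M) : H.FG := by
  haveI := hM
  haveI : AddGroup.FG (Additive M) := GroupFG.iff_add_fg.1 hM
  haveI : Module.Finite ℤ (Additive M) := Module.Finite.iff_addGroup_fg.mpr ‹_›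
  haveI : IsNoetherian ℤ (Additive M) := isNoetherian_of_isNoetherianRing_of_finite ℤ (Additive M)
  rw [Subgroup.fg_iff_add_fg]
  have h2 := IsNoetherian.noetherian (AddSubgroup.toIntSubmodule H.toAddSubgroup)
  rwa [Submodule.fg_iff_addSubgroup_fg] at h2

def myPiEquiv (G M : Type*) [CommGroup M] : Multiplicative (G → Additive M) ≃* (G → M) where
  toFun f σ := Additive.toMul (Multiplicative.toAdd f σ)
  invFun f := Multiplicative.ofAdd (fun σ => Additive.ofMul (f σ))
  left_inv _ := rfl
  right_inv _ := rfl
  map_mul' _ _ := rfl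

lemma my_pi_fg (G M : Type*) [Finite G] [CommGroup M] (h : Group.FG M) : Group.FG (G → M) := by
  haveI : AddGroup.FG (Additive M) := GroupFG.iff_add_fg.1 h
  haveI : Module.Finite ℤ (Additive M) := Module.Finite.iff_addGroup_fg.mpr ‹_›
  haveI : Module.Finite ℤ (G → Additive M) := Module.Finite.pi
  haveI : AddGroup.FG (G → Additive M) := Module.Finite.iff_addGroup_fg.mp ‹_›
  exact Group.fg_of_surjective (f := (myPiEquiv G M).toMonoidHom) (myPiEquiv G M).surjective

lemma key_ab (G : Type) [Group G] [Finite G] (M : Type) [CommGroup M]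
    (hfg : Group.FG M) (t : G → M →* M) :
    ∃ (H : Type) (_ : Finite H)
      (cl : {a : G → M // ∀ σ τ : G, a (σ * τ) = a σ * t σ (a τ)} → H),
      ∀ a a', cl a = cl a' → ∃ m : M, ∀ σ, a'.1 σ = m⁻¹ * a.1 σ * t σ m := by
  classical
  haveI := Fintype.ofFinite G
  -- the subgroup of cocycles
  let Z : Subgroup (G → M) :=
    { carrier := {a | ∀ σ τ : G, a (σ * τ) = a σ * t σ (a τ)}
      mul_mem' := by
        intro a b ha hb σ τ
        simp only [Pi.mul_apply, ha σ τ, hb σ τ, map_mul]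
        exact mul_mul_mul_comm _ _ _ _
      one_mem' := by intro σ τ; simp
      inv_mem' := by
        intro a ha σ τ
        simp only [Pi.inv_apply, ha σ τ, map_inv, mul_inv_rev, mul_comm] }
  -- the coboundary homomorphism
  let δ : M →* (G → M) :=
    { toFun := fun m σ => m⁻¹ * t σ m
      map_one' := by funext σ; simp
      map_mul' := by
        intro m n; funext σ
        show (m*n)⁻¹ * t σ (m*n) = (m⁻¹ * t σ m) * (n⁻¹ * t σ n)
        rw [map_mul, mul_inv_rev]
        simp [mul_assoc, mul_comm, mul_left_comm] }
  let B : Subgroup Z := δ.range.subgroupOf Z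
  haveI : Group.FG Z := (Group.fg_iff_subgroup_fg Z).mpr (my_subgroup_fg (my_pi_fg G M hfg) Z)
  -- torsion
  have htor : Monoid.IsTorsion (Z ⧸ B) := by
    intro x
    rw [isOfFinOrder_iff_pow_eq_one]
    refine ⟨Fintype.card G, Fintype.card_pos, ?_⟩
    obtain ⟨z, rfl⟩ := QuotientGroup.mk_surjective x
    rw [← QuotientGroup.mk_pow, QuotientGroup.eq_one_iff, Subgroup.mem_subgroupOf]
    refine ⟨(∏ τ : G, z.1 τ)⁻¹, ?_⟩
    have hP : ∀ σ : G, ∏ τ : G, z.1 τ = z.1 σ ^ Fintype.card G * t σ (∏ τ : G, z.1 τ) := by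
      intro σ
      calc ∏ τ : G, z.1 τ = ∏ τ : G, z.1 (σ * τ) :=
            (Equiv.prod_comp (Equiv.mulLeft σ) z.1).symm
        _ = ∏ τ : G, (z.1 σ * t σ (z.1 τ)) := by
            refine Finset.prod_congr rfl fun τ _ => z.2 σ τ
        _ = z.1 σ ^ Fintype.card G * t σ (∏ τ : G, z.1 τ) := by
            rw [Finset.prod_mul_distrib, Finset.prod_const, Finset.card_univ, ← map_prod]
    funext σ
    show (∏ τ : G, z.1 τ)⁻¹⁻¹ * t σ (∏ τ : G, z.1 τ)⁻¹ = _
    have : ((z ^ Fintype.card G : Z) : G → M) σ = z.1 σ ^ Fintype.card G := by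
      rw [SubgroupClass.coe_pow, Pi.pow_apply]
    rw [this, map_inv, inv_inv, mul_inv_eq_iff_eq_mul]
    exact hP σ
  haveI hfinQ : Finite (Z ⧸ B) := CommGroup.finite_of_fg_torsion _ htor
  refine ⟨Z ⧸ B, hfinQ, fun a => QuotientGroup.mk (⟨a.1, a.2⟩ : Z), ?_⟩
  intro a a' h
  rw [QuotientGroup.eq, Subgroup.mem_subgroupOf] at h
  obtain ⟨m, hm⟩ := h
  refine ⟨m, fun σ => ?_⟩
  have : δ m σ = ((⟨a.1, a.2⟩ : Z)⁻¹ * ⟨a'.1, a'.2⟩ : Z).1 σ := by rw [hm]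
  simp only [δ, MonoidHom.coe_mk, OneHom.coe_mk] at this
  have h2 : m⁻¹ * t σ m = (a.1 σ)⁻¹ * a'.1 σ := this
  calc a'.1 σ = a.1 σ * ((a.1 σ)⁻¹ * a'.1 σ) := by group
    _ = a.1 σ * (m⁻¹ * t σ m) := by rw [← h2]
    _ = m⁻¹ * a.1 σ * t σ m := by simp [mul_assoc, mul_comm, mul_left_comm]

/-- Let `G` be a finite group acting by automorphisms on a group `Λ`.
If `Λ` admits a finite-index subgroup `Θ` that is a finitely generated abelian group,
then the nonabelian cohomology set `H¹(G, Λ)` (continuous cocycles modulo the standard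
equivalence) is finite. -/
theorem h1_finite_of_fg_abelian_finite_index
    (G : Type) [Group G] [Finite G] (Λ : Type) [Group Λ] [MulDistribMulAction G Λ]
    (Θ : Subgroup Λ) (hindex : Θ.FiniteIndex) (hfg : Θ.FG)
    (habelian : ∀ a b : Θ, a * b = b * a) :
    Finite (Quot (fun (ξ ξ' : {ξ : G → Λ // ∀ σ τ : G, ξ (σ * τ) = ξ σ * σ • ξ τ}) =>
      ∃ l : Λ, ∀ σ : G, ξ'.1 σ = l⁻¹ * ξ.1 σ * σ • l)) := by
  classical
  haveI := hindex
  set X := {ξ : G → Λ // ∀ σ τ : G, ξ (σ * τ) = ξ σ * σ • ξ τ} with hXdef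
  set r := fun (ξ ξ' : X) => ∃ l : Λ, ∀ σ : G, ξ'.1 σ = l⁻¹ * ξ.1 σ * σ • l with hrdef
  obtain hX | hX := isEmpty_or_nonempty X
  · haveI : IsEmpty (Quot r) := ⟨Quot.ind fun a => hX.false a⟩
    infer_instance
  -- Step 1: the G-stable normal finite-index subgroup N ≤ Θ
  let K := Θ.normalCore
  let N : Subgroup Λ := ⨅ σ : G, K.comap (MulDistribMulAction.toMonoidHom Λ σ)
  have hmemN : ∀ x : Λ, x ∈ N ↔ ∀ σ : G, σ • x ∈ K := by
    intro x
    simp only [N, Subgroup.mem_iInf, Subgroup.mem_comap]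
    rfl
  haveI hNn : N.Normal := by
    constructor
    intro n hn g
    rw [hmemN] at hn ⊢
    intro σ
    have h2 := (Subgroup.normalCore_normal Θ).conj_mem _ (hn σ) (σ • g)
    simpa [smul_mul', smul_inv'] using h2
  haveI hNfi : N.FiniteIndex := by
    refine Subgroup.finiteIndex_iInf (fun σ => ?_)
    constructor
    rw [Subgroup.index_comap, MonoidHom.range_eq_top.2
      (fun y => ⟨σ⁻¹ • y, smul_inv_smul σ y⟩), Subgroup.relIndex_top_right]
    exact Subgroup.FiniteIndex.index_ne_zero
  have hNΘ : N ≤ Θ := by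
    intro x hx
    have h1 := (hmemN x).1 hx 1
    rw [one_smul] at h1
    exact Θ.normalCore_le h1
  have hstab : ∀ (σ : G) (x : Λ), x ∈ N → σ • x ∈ N := by
    intro σ x hx
    rw [hmemN] at hx ⊢
    intro τ
    rw [smul_smul]
    exact hx (τ * σ)
  -- commutativity and finite generation of N
  letI : CommGroup ↥N :=
    { (inferInstance : Group ↥N) with
      mul_comm := fun a b => by
        have h := habelian ⟨a.1, hNΘ a.2⟩ ⟨b.1, hNΘ b.2⟩
        rw [Subtype.ext_iff] at h ⊢
        exact h }
  letI : CommGroup ↥Θ := { (inferInstance : Group ↥Θ) with mul_comm := habelian }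
  haveI : Group.FG ↥Θ := (Group.fg_iff_subgroup_fg Θ).mpr hfg
  have hNsub : (N.subgroupOf Θ).FG := my_subgroup_fg (M := ↥Θ) ‹Group.FG ↥Θ› (N.subgroupOf Θ)
  haveI : Group.FG ↥(N.subgroupOf Θ) := (Group.fg_iff_subgroup_fg _).mpr hNsub
  have hNfg : Group.FG ↥N :=
    Group.fg_of_surjective (f := (Subgroup.subgroupOfEquivOfLe hNΘ).toMonoidHom)
      (Subgroup.subgroupOfEquivOfLe hNΘ).surjective
  -- the reduction map
  let red : X → (G → Λ ⧸ N) := fun ξ σ => QuotientGroup.mk (ξ.1 σ)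
  have hmem2 : ∀ (ξ₀ ξ : X), red ξ₀ = red ξ → ∀ σ : G, ξ.1 σ * (ξ₀.1 σ)⁻¹ ∈ N := by
    intro ξ₀ ξ h σ
    have h1 : (QuotientGroup.mk (ξ₀.1 σ) : Λ ⧸ N) = QuotientGroup.mk (ξ.1 σ) := congrFun h σ
    rw [QuotientGroup.eq] at h1
    have h2 := hNn.conj_mem _ h1 (ξ₀.1 σ)
    have h3 : ξ₀.1 σ * ((ξ₀.1 σ)⁻¹ * ξ.1 σ) * (ξ₀.1 σ)⁻¹ = ξ.1 σ * (ξ₀.1 σ)⁻¹ := by group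
    rwa [h3] at h2
  -- the twisting endomorphisms
  let t : X → G → (↥N →* ↥N) := fun ξ₀ σ =>
    { toFun := fun n => ⟨ξ₀.1 σ * (σ • (n : Λ)) * (ξ₀.1 σ)⁻¹, hNn.conj_mem _ (hstab σ _ n.2) _⟩
      map_one' := by
        apply Subtype.ext
        show ξ₀.1 σ * (σ • (1 : Λ)) * (ξ₀.1 σ)⁻¹ = 1
        simp
      map_mul' := fun a b => by
        apply Subtype.ext
        show ξ₀.1 σ * (σ • ((a : Λ) * b)) * (ξ₀.1 σ)⁻¹
            = (ξ₀.1 σ * (σ • (a : Λ)) * (ξ₀.1 σ)⁻¹) * (ξ₀.1 σ * (σ • (b : Λ)) * (ξ₀.1 σ)⁻¹)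
        rw [smul_mul']
        group }
  -- base-point choice
  let b : (G → Λ ⧸ N) → X := fun ρ => if h : ∃ ξ : X, red ξ = ρ then h.choose else hX.some
  have hb : ∀ (ρ : G → Λ ⧸ N) (ξ : X), red ξ = ρ → red (b ρ) = ρ := by
    intro ρ ξ hξ
    have h : ∃ ξ' : X, red ξ' = ρ := ⟨ξ, hξ⟩
    simp only [b, dif_pos h]
    exact h.choose_spec
  -- the twisted cocycle attached to ξ relative to the base point
  let A : ∀ (ρ : G → Λ ⧸ N) (ξ : X), red ξ = ρ →
      {a : G → ↥N // ∀ σ τ : G, a (σ * τ) = a σ * t (b ρ) σ (a τ)} := fun ρ ξ hξ =>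
    ⟨fun σ => ⟨ξ.1 σ * ((b ρ).1 σ)⁻¹, hmem2 (b ρ) ξ ((hb ρ ξ hξ).trans hξ.symm) σ⟩,
      fun σ τ => Subtype.ext (by
        show ξ.1 (σ * τ) * ((b ρ).1 (σ * τ))⁻¹
            = (ξ.1 σ * ((b ρ).1 σ)⁻¹) *
              ((b ρ).1 σ * (σ • (ξ.1 τ * ((b ρ).1 τ)⁻¹)) * ((b ρ).1 σ)⁻¹)
        rw [ξ.2 σ τ, (b ρ).2 σ τ, smul_mul', smul_inv', mul_inv_rev]
        group)⟩
  -- apply the abelian finiteness result fiberwise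
  have hk : ∀ ρ : G → Λ ⧸ N, ∃ (H : Type) (_ : Finite H)
      (cl : {a : G → ↥N // ∀ σ τ : G, a (σ * τ) = a σ * t (b ρ) σ (a τ)} → H),
      ∀ a a', cl a = cl a' → ∃ m : ↥N, ∀ σ, a'.1 σ = m⁻¹ * a.1 σ * t (b ρ) σ m :=
    fun ρ => key_ab G ↥N hNfg (t (b ρ))
  choose HT hfin cl hcl using hk
  haveI : ∀ ρ, Finite (HT ρ) := hfin
  haveI : Finite (Λ ⧸ N) := Subgroup.finite_quotient_of_finiteIndex (H := N)
  refine Finite.of_surjective (f := fun p : Σ ρ : G → Λ ⧸ N, HT ρ =>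
    if h : ∃ w : {ξ : X // red ξ = p.1}, cl p.1 (A p.1 w.1 w.2) = p.2
    then Quot.mk r h.choose.1 else Quot.mk r hX.some) ?_
  intro q
  refine ⟨⟨red q.out, cl (red q.out) (A (red q.out) q.out rfl)⟩, ?_⟩
  dsimp only
  have hcond : ∃ w : {ξ : X // red ξ = red q.out},
      cl (red q.out) (A (red q.out) w.1 w.2) = cl (red q.out) (A (red q.out) q.out rfl) :=
    ⟨⟨q.out, rfl⟩, rfl⟩
  rw [dif_pos hcond]
  obtain ⟨m, hm⟩ := hcl (red q.out) _ _ hcond.choose_spec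
  have hrel : r hcond.choose.1 q.out := by
    refine ⟨(m : Λ), fun σ => ?_⟩
    have e := congrArg Subtype.val (hm σ)
    have e2 : q.out.1 σ * ((b (red q.out)).1 σ)⁻¹ =
        (m : Λ)⁻¹ * (hcond.choose.1.1 σ * ((b (red q.out)).1 σ)⁻¹) *
          ((b (red q.out)).1 σ * (σ • (m : Λ)) * ((b (red q.out)).1 σ)⁻¹) := e
    have e3 : q.out.1 σ =
        ((m : Λ)⁻¹ * (hcond.choose.1.1 σ * ((b (red q.out)).1 σ)⁻¹) *
          ((b (red q.out)).1 σ * (σ • (m : Λ)) * ((b (red q.out)).1 σ)⁻¹)) *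
          (b (red q.out)).1 σ := by
      rw [← e2]; group
    rw [e3]; group
  exact (Quot.sound hrel).trans q.out_eq
end

section
/- Let G be a profinite group and N a closed normal subgroup of G. If both N and G/N are small (i.e., for every finite group Φ the set of continuous homomorphisms to Φ is finite), then G is small. -/
/-- A profinite (topological) group is *small* if for every finite (discrete) group `Φ`,
the set of continuous homomorphisms into `Φ` is finite (Serre's condition (F)). -/
def IsSmall (G : Type) [Group G] [TopologicalSpace G] : Prop :=
  ∀ (Φ : Type) [Group Φ] [TopologicalSpace Φ] [DiscreteTopology Φ] [Finite Φ],
    Finite {f : G →* Φ // Continuous f}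

section Aux

variable {G Φ : Type} [Group G] [Group Φ]

/-- Auxiliary permutation representation: for `f, f₀ : G →* Φ` and a subgroup `C`
stable under `x ↦ f g * x * (f₀ g)⁻¹`, the map sending `g` to this permutation of `C`
is a group homomorphism. -/
def twistPerm (C : Subgroup Φ) (f f₀ : G →* Φ)
    (h : ∀ (g : G) (x : Φ), x ∈ C → f g * x * (f₀ g)⁻¹ ∈ C) : G →* Equiv.Perm C :=
  MonoidHom.mk'
    (fun g =>
      { toFun := fun x => ⟨f g * x * (f₀ g)⁻¹, h g x x.2⟩
        invFun := fun x => ⟨f g⁻¹ * x * (f₀ g⁻¹)⁻¹, h g⁻¹ x x.2⟩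
        left_inv := fun x => Subtype.ext (by
          simp only [map_inv, inv_inv]
          group)
        right_inv := fun x => Subtype.ext (by
          simp only [map_inv, inv_inv]
          group) })
    (fun a b => Equiv.ext fun x => Subtype.ext (by
      simp only [Equiv.Perm.mul_apply, Equiv.coe_fn_mk, map_mul, mul_inv_rev]
      group))

theorem twistPerm_apply_coe (C : Subgroup Φ) (f f₀ : G →* Φ)
    (h : ∀ (g : G) (x : Φ), x ∈ C → f g * x * (f₀ g)⁻¹ ∈ C) (g : G) (x : C) :
    (twistPerm C f f₀ h g x : Φ) = f g * x * (f₀ g)⁻¹ := rfl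

/-- The key finiteness lemma: the set of continuous homomorphisms `G →* Φ`
agreeing with a fixed continuous `f₀` on a normal subgroup `N` is finite, provided
`G ⧸ N` is small. -/
theorem finite_fiber [TopologicalSpace G] [TopologicalSpace Φ] [DiscreteTopology Φ] [Finite Φ]
    (N : Subgroup G) [N.Normal] (hQ : IsSmall (G ⧸ N)) (f₀ : G →* Φ) (hf₀ : Continuous f₀) :
    Finite {f : G →* Φ // Continuous f ∧ ∀ n ∈ N, f n = f₀ n} := by
  classical
  set C : Subgroup Φ := Subgroup.centralizer (f₀ '' (N : Set G)) with hCdef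
  -- key stability statement
  have key : ∀ (f : G →* Φ), (∀ n ∈ N, f n = f₀ n) →
      ∀ (g : G) (x : Φ), x ∈ C → f g * x * (f₀ g)⁻¹ ∈ C := by
    intro f hf g x hx
    rw [hCdef, Subgroup.mem_centralizer_iff]
    rintro y ⟨n, hn, rfl⟩
    have hmem : g⁻¹ * n * g ∈ N := by
      have := Subgroup.Normal.conj_mem ‹N.Normal› n hn g⁻¹
      simpa [mul_assoc] using this
    have h1 : f₀ (g⁻¹ * n * g) = (f g)⁻¹ * f₀ n * f g := by
      rw [← hf _ hmem, map_mul, map_mul, map_inv, hf n hn]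
    have h2 : f₀ (g⁻¹ * n * g) = (f₀ g)⁻¹ * f₀ n * (f₀ g) := by
      rw [map_mul, map_mul, map_inv]
    have H1 : ((f₀ g)⁻¹ * f₀ n * (f₀ g)) * x = x * ((f₀ g)⁻¹ * f₀ n * (f₀ g)) := by
      have hx' := Subgroup.mem_centralizer_iff.mp hx (f₀ (g⁻¹ * n * g)) ⟨_, hmem, rfl⟩
      rwa [h2] at hx'
    have H2 : (f g)⁻¹ * f₀ n * f g = (f₀ g)⁻¹ * f₀ n * (f₀ g) := h1.symm.trans h2
    have H3 : f₀ n * f g = f g * ((f₀ g)⁻¹ * f₀ n * (f₀ g)) := by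
      calc f₀ n * f g = f g * ((f g)⁻¹ * f₀ n * f g) := by group
        _ = f g * ((f₀ g)⁻¹ * f₀ n * (f₀ g)) := by rw [H2]
    calc f₀ n * (f g * x * (f₀ g)⁻¹)
        = (f₀ n * f g) * x * (f₀ g)⁻¹ := by group
      _ = (f g * ((f₀ g)⁻¹ * f₀ n * (f₀ g))) * x * (f₀ g)⁻¹ := by rw [H3]
      _ = f g * (((f₀ g)⁻¹ * f₀ n * (f₀ g)) * x) * (f₀ g)⁻¹ := by group
      _ = f g * (x * ((f₀ g)⁻¹ * f₀ n * (f₀ g))) * (f₀ g)⁻¹ := by rw [H1]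
      _ = f g * x * (f₀ g)⁻¹ * f₀ n := by group
  -- set up the finite discrete target group
  letI : TopologicalSpace (Equiv.Perm C) := ⊥
  haveI : DiscreteTopology (Equiv.Perm C) := ⟨rfl⟩
  haveI : Finite {F : G ⧸ N →* Equiv.Perm C // Continuous F} := hQ (Equiv.Perm C)
  -- the twist homomorphisms kill N
  have hker : ∀ f : {f : G →* Φ // Continuous f ∧ ∀ n ∈ N, f n = f₀ n},
      N ≤ (twistPerm C f.1 f₀ (key f.1 f.2.2)).ker := by
    intro f n hn
    rw [MonoidHom.mem_ker]
    refine Equiv.ext fun x => Subtype.ext ?_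
    have hcomm : f₀ n * (x : Φ) = (x : Φ) * f₀ n :=
      Subgroup.mem_centralizer_iff.mp x.2 (f₀ n) ⟨n, hn, rfl⟩
    show f.1 n * (x : Φ) * (f₀ n)⁻¹ = ((1 : Equiv.Perm C) x : Φ)
    rw [f.2.2 n hn, hcomm]
    simp
  -- continuity of the twist homomorphisms
  have hPermCont : ∀ f : {f : G →* Φ // Continuous f ∧ ∀ n ∈ N, f n = f₀ n},
      Continuous (twistPerm C f.1 f₀ (key f.1 f.2.2)) := by
    intro f
    rw [continuous_discrete_rng]
    intro σ
    have heq : (twistPerm C f.1 f₀ (key f.1 f.2.2)) ⁻¹' {σ} =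
        ⋂ (x : C), (fun g : G => (f.1 g, f₀ g)) ⁻¹'
          {p : Φ × Φ | p.1 * (x : Φ) * p.2⁻¹ = (σ x : Φ)} := by
      ext g
      simp only [Set.mem_preimage, Set.mem_singleton_iff, Set.mem_iInter, Set.mem_setOf_eq,
        Equiv.ext_iff, Subtype.ext_iff]
      rfl
    rw [heq]
    exact isOpen_iInter_of_finite fun x =>
      (f.2.1.prodMk hf₀).isOpen_preimage _ (isOpen_discrete _)
  -- the induced continuous homomorphisms on the quotient
  have hLiftCont : ∀ f : {f : G →* Φ // Continuous f ∧ ∀ n ∈ N, f n = f₀ n},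
      Continuous (QuotientGroup.lift N (twistPerm C f.1 f₀ (key f.1 f.2.2)) (hker f)) := by
    intro f
    rw [(QuotientGroup.isQuotientMap_mk N).continuous_iff]
    have : (QuotientGroup.lift N (twistPerm C f.1 f₀ (key f.1 f.2.2)) (hker f)) ∘
        (QuotientGroup.mk : G → G ⧸ N) = twistPerm C f.1 f₀ (key f.1 f.2.2) := by
      funext g
      rfl
    rw [this]
    exact hPermCont f
  -- the injection into continuous homomorphisms from the quotient
  refine Finite.of_injective
    (fun f : {f : G →* Φ // Continuous f ∧ ∀ n ∈ N, f n = f₀ n} =>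
      (⟨QuotientGroup.lift N (twistPerm C f.1 f₀ (key f.1 f.2.2)) (hker f), hLiftCont f⟩ :
        {F : G ⧸ N →* Equiv.Perm C // Continuous F})) ?_
  intro f f' hff
  have hval := congrArg Subtype.val hff
  ext g
  have h1 : (twistPerm C f.1 f₀ (key f.1 f.2.2)) g = (twistPerm C f'.1 f₀ (key f'.1 f'.2.2)) g := by
    have := congrArg (fun F : G ⧸ N →* Equiv.Perm C => F (QuotientGroup.mk g)) hval
    simpa [QuotientGroup.lift_mk] using this
  have h2 := congrArg (fun σ : Equiv.Perm C => ((σ ⟨1, C.one_mem⟩ : C) : Φ)) h1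
  simp only [twistPerm_apply_coe, mul_one] at h2
  exact mul_right_cancel h2

end Aux

/-- Let `G` be a profinite group and `N` a closed normal subgroup.
If both `N` and `G/N` are small, then `G` is small. -/
theorem isSmall_of_isSmall_of_isSmall_quotient
    (G : Type) [Group G] [TopologicalSpace G] [IsTopologicalGroup G]
    [CompactSpace G] [T2Space G] [TotallyDisconnectedSpace G]
    (N : Subgroup G) [N.Normal] (hclosed : IsClosed (N : Set G))
    (hN : IsSmall N) (hQ : IsSmall (G ⧸ N)) :
    IsSmall G := by
  intro Φ _ _ _ _
  classical
  haveI : Finite {φ : N →* Φ // Continuous φ} := hN Φ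
  let r : {f : G →* Φ // Continuous f} → {φ : N →* Φ // Continuous φ} :=
    fun f => ⟨f.1.comp N.subtype, f.2.comp continuous_subtype_val⟩
  haveI : ∀ φ, Finite {f : {f : G →* Φ // Continuous f} // r f = φ} := by
    intro φ
    by_cases hne : Nonempty {f : {f : G →* Φ // Continuous f} // r f = φ}
    · obtain ⟨f₀, hf₀⟩ := hne
      haveI := finite_fiber N hQ f₀.1 f₀.2
      refine Finite.of_injective
        (fun f : {f : {f : G →* Φ // Continuous f} // r f = φ} =>
          (⟨f.1.1, f.1.2, ?_⟩ : {f : G →* Φ // Continuous f ∧ ∀ n ∈ N, f n = f₀.1 n})) ?_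
      · intro n hn
        have : r f.1 = r f₀ := f.2.trans hf₀.symm
        have := congrArg (fun ψ : {φ : N →* Φ // Continuous φ} => ψ.1 ⟨n, hn⟩) this
        simpa [r] using this
      · intro f f' hff
        rw [Subtype.mk.injEq] at hff
        exact Subtype.ext (Subtype.ext hff)
    · haveI : IsEmpty {f : {f : G →* Φ // Continuous f} // r f = φ} := not_nonempty_iff.mp hne
      infer_instance
  exact Finite.of_equiv _ (Equiv.sigmaFiberEquiv r)
end

section
/- Every topologically finitely generated profinite group is small. -/
/-- Every topologically finitely generated profinite group (one containing
a dense finitely generated subgroup) is small. -/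
theorem isSmall_of_topologically_finitely_generated
    (G : Type) [Group G] [TopologicalSpace G] [IsTopologicalGroup G]
    [CompactSpace G] [T2Space G] [TotallyDisconnectedSpace G]
    (S : Finset G) (hdense : Dense ((Subgroup.closure (S : Set G) : Subgroup G) : Set G)) :
    IsSmall G := by
  intro Φ _ _ _ _
  have hinj : Function.Injective
      (fun f : {f : G →* Φ // Continuous f} => fun s : S => f.1 s) := by
    intro f g h
    ext x
    have heq : Set.EqOn (f.1 : G → Φ) g.1 ((Subgroup.closure (S : Set G) : Subgroup G) : Set G) :=
      MonoidHom.eqOn_closure fun y hy => congrFun h ⟨y, hy⟩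
    have : (f.1 : G → Φ) = g.1 := Continuous.ext_on hdense f.2 g.2 heq
    exact congrFun this x
  exact Finite.of_injective _ hinj
end

section
/- Let 1 → E → G → H → 1 be an extension of profinite groups (E a closed normal subgroup of G with quotient H), and let p be a prime. If both E and H satisfy condition (F(p)), then so does G. -/
open scoped Pointwise



/-- Condition (F(p)): for every finite (discrete) group `Φ` of order prime to `p`, the set of
continuous homomorphisms into `Φ` is finite. -/
def SatisfiesFp (p : ℕ) (G : Type) [Group G] [TopologicalSpace G] : Prop :=
  ∀ (Φ : Type) [Group Φ] [TopologicalSpace Φ] [DiscreteTopology Φ] [Finite Φ],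
    ¬ p ∣ Nat.card Φ → Finite {f : G →* Φ // Continuous f}

noncomputable section FpAux

variable {G : Type} [Group G]

/-- Permutation action of `Q` on `Q → Φ'` by left translation. -/
def fpPermAct (Q Φ' : Type) [Group Q] [Group Φ'] : Q →* MulAut (Q → Φ') :=
  MonoidHom.mk' (fun q => MulEquiv.arrowCongr (Equiv.mulLeft q) (MulEquiv.refl Φ'))
    (by
      intro a b
      ext F x
      show F ((a * b)⁻¹ * x) = F (b⁻¹ * (a⁻¹ * x))
      rw [mul_inv_rev, mul_assoc])

@[simp] lemma fpPermAct_apply {Q Φ' : Type} [Group Q] [Group Φ'] (q : Q) (F : Q → Φ') (x : Q) :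
    fpPermAct Q Φ' q F x = F (q⁻¹ * x) := rfl

variable (P : Subgroup G) [P.Normal] {Φ' : Type} [Group Φ']

/-- The element of `P` used in the induced homomorphism. -/
def fpIndElt (h : G) (q : G ⧸ P) : G :=
  (Quotient.out q)⁻¹ * h * Quotient.out (((h : G ⧸ P))⁻¹ * q)

lemma fpIndElt_mem (h : G) (q : G ⧸ P) : fpIndElt P h q ∈ P := by
  rw [← QuotientGroup.eq_one_iff]
  show (QuotientGroup.mk' P) _ = 1
  simp only [fpIndElt, map_mul, map_inv, QuotientGroup.mk'_apply, QuotientGroup.out_eq']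
  group

/-- The induced homomorphism `G →* Φ' ≀ (G ⧸ P)` of a homomorphism `ξ : P →* Φ'`. -/
def fpInd (ξ : ↥P →* Φ') : G →* ((G ⧸ P → Φ') ⋊[fpPermAct (G ⧸ P) Φ'] (G ⧸ P)) :=
  MonoidHom.mk' (fun h => ⟨fun q => ξ ⟨fpIndElt P h q, fpIndElt_mem P h q⟩, (h : G ⧸ P)⟩)
    (by
      intro a b
      refine SemidirectProduct.ext ?_ (by simp [SemidirectProduct.mul_right])
      rw [SemidirectProduct.mul_left]
      funext q
      show ξ ⟨fpIndElt P (a * b) q, _⟩ = (ξ ⟨fpIndElt P a q, _⟩) * ξ ⟨fpIndElt P b (((a : G ⧸ P))⁻¹ * q), _⟩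
      rw [← map_mul]
      congr 1
      refine Subtype.ext ?_
      show fpIndElt P (a * b) q = fpIndElt P a q * fpIndElt P b (((a : G ⧸ P))⁻¹ * q)
      have harg : ((b : G ⧸ P))⁻¹ * (((a : G ⧸ P))⁻¹ * q) = (((a * b : G) : G ⧸ P))⁻¹ * q := by
        rw [QuotientGroup.mk_mul, mul_inv_rev, mul_assoc]
      simp only [fpIndElt, harg]
      group)

@[simp] lemma fpInd_apply_right (ξ : ↥P →* Φ') (h : G) :
    (fpInd P ξ h).right = (h : G ⧸ P) := rfl

@[simp] lemma fpInd_apply_left (ξ : ↥P →* Φ') (h : G) (q : G ⧸ P) :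
    (fpInd P ξ h).left q = ξ ⟨fpIndElt P h q, fpIndElt_mem P h q⟩ := rfl

end FpAux

noncomputable section FpAux2

variable {G : Type} [Group G] {Φ' : Type} [Group Φ']
variable (Z E : Subgroup G) [E.Normal]

lemma fpDecomp (x : G) (hx : x ∈ Z ⊔ E) : ∃ z : ↥Z, ∃ e : G, e ∈ E ∧ x = ↑z * e := by
  have : x ∈ (↑(Z ⊔ E) : Set G) := hx
  rw [Subgroup.mul_normal] at this
  obtain ⟨z, hz, e, he, hze⟩ := this
  exact ⟨⟨z, hz⟩, e, he, hze.symm⟩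

variable {Z E}

lemma fpExt_wd (χ : ↥Z →* Φ') (hχ : ∀ z : ↥Z, (z : G) ∈ E → χ z = 1)
    {z₁ z₂ : ↥Z} {e₁ e₂ : G} (he₁ : e₁ ∈ E) (he₂ : e₂ ∈ E)
    (h : (z₁ : G) * e₁ = (z₂ : G) * e₂) : χ z₁ = χ z₂ := by
  have hmem : ((z₂⁻¹ * z₁ : ↥Z) : G) ∈ E := by
    have hz₁ : (z₁ : G) = ↑z₂ * e₂ * e₁⁻¹ := eq_mul_inv_of_mul_eq h
    have : ((z₂⁻¹ * z₁ : ↥Z) : G) = e₂ * e₁⁻¹ := by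
      rw [Subgroup.coe_mul, Subgroup.coe_inv, hz₁]
      group
    rw [this]
    exact E.mul_mem he₂ (E.inv_mem he₁)
  have h1 := hχ _ hmem
  rw [map_mul, map_inv] at h1
  exact (inv_mul_eq_one.mp h1).symm

variable (Z E) in
/-- Extension of `χ : Z →* Φ'` killing `Z ⊓ E` to `Z ⊔ E`, killing `E`. -/
def fpExt (χ : ↥Z →* Φ') (hχ : ∀ z : ↥Z, (z : G) ∈ E → χ z = 1) : ↥(Z ⊔ E) →* Φ' :=
  MonoidHom.mk' (fun x => χ (fpDecomp Z E x x.2).choose)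
    (by
      intro a b
      show χ (fpDecomp Z E ↑(a * b) (a * b).2).choose
          = χ (fpDecomp Z E ↑a a.2).choose * χ (fpDecomp Z E ↑b b.2).choose
      rw [← map_mul]
      obtain ⟨ea, hea, haeq⟩ := (fpDecomp Z E (↑a) a.2).choose_spec
      obtain ⟨eb, heb, hbeq⟩ := (fpDecomp Z E (↑b) b.2).choose_spec
      obtain ⟨eab, heab, habeq⟩ := (fpDecomp Z E (↑(a*b)) (a*b).2).choose_spec
      set za := (fpDecomp Z E (↑a) a.2).choose
      set zb := (fpDecomp Z E (↑b) b.2).choose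
      set zab := (fpDecomp Z E (↑(a*b)) (a*b).2).choose
      refine fpExt_wd χ hχ heab
        (e₂ := ((zb : G))⁻¹ * ea * (zb : G) * eb)
        (E.mul_mem (Subgroup.Normal.conj_mem' ‹E.Normal› _ hea _) heb) ?_
      rw [← habeq, Subgroup.coe_mul, haeq, hbeq]
      simp only [Subgroup.coe_mul]
      group)

lemma fpExt_spec (χ : ↥Z →* Φ') (hχ) (x : ↥(Z ⊔ E)) (z : ↥Z) (e : G) (he : e ∈ E)
    (hx : (x : G) = ↑z * e) : fpExt Z E χ hχ x = χ z := by
  obtain ⟨e₀, he₀, heq₀⟩ := (fpDecomp Z E x x.2).choose_spec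
  exact fpExt_wd χ hχ he₀ he (by rw [← heq₀, ← hx])

lemma fpExt_coe (χ : ↥Z →* Φ') (hχ) (z : ↥Z) (h : (z : G) ∈ Z ⊔ E) :
    fpExt Z E χ hχ ⟨z, h⟩ = χ z :=
  fpExt_spec χ hχ _ z 1 (one_mem E) (by simp)

lemma fpExt_eq_one (χ : ↥Z →* Φ') (hχ) (x : ↥(Z ⊔ E)) (h : (x : G) ∈ E) :
    fpExt Z E χ hχ x = 1 := by
  rw [fpExt_spec χ hχ x 1 x h (by simp), map_one]

end FpAux2

lemma fp_dset_finite (p : ℕ) (hp : p.Prime)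
    {G : Type} [Group G] [TopologicalSpace G] [IsTopologicalGroup G] [CompactSpace G]
    (E : Subgroup G) [E.Normal] (hQ : SatisfiesFp p (G ⧸ E))
    (Z : Subgroup G) [Z.Normal] (hZopen : IsOpen (Z : Set G))
    (hPind : ¬ p ∣ Nat.card (G ⧸ (Z ⊔ E)))
    (Φ' : Type) [Group Φ'] [TopologicalSpace Φ'] [DiscreteTopology Φ'] [Finite Φ']
    (hΦ' : ¬ p ∣ Nat.card Φ') :
    Finite {d : {f : ↥Z →* Φ' // Continuous f} // ∀ z : ↥Z, (z : G) ∈ E → d.1 z = 1} := by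
  classical
  set P : Subgroup G := Z ⊔ E with hPdef
  have hPopen : IsOpen (P : Set G) := Subgroup.isOpen_mono le_sup_left hZopen
  haveI : Finite (G ⧸ P) := P.quotient_finite_of_isOpen hPopen
  set Γ := (G ⧸ P → Φ') ⋊[fpPermAct (G ⧸ P) Φ'] (G ⧸ P) with hΓdef
  have eΓ : Γ ≃ ((G ⧸ P → Φ') × (G ⧸ P)) :=
    ⟨fun x => (x.left, x.right), fun x => ⟨x.1, x.2⟩, fun x => rfl, fun x => rfl⟩
  haveI : Finite Γ := Finite.of_equiv _ eΓ.symm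
  have hcardΓ : ¬ p ∣ Nat.card Γ := by
    rw [Nat.card_congr eΓ, Nat.card_prod, Nat.card_fun]
    intro hdvd
    rcases (Nat.Prime.dvd_mul hp).1 hdvd with h | h
    · exact hΦ' (hp.dvd_of_dvd_pow h)
    · exact hPind h
  letI : TopologicalSpace Γ := ⊥
  haveI : DiscreteTopology Γ := ⟨rfl⟩
  haveI hfin : Finite {f : G ⧸ E →* Γ // Continuous f} := hQ Γ hcardΓ
  -- the induced homomorphism from `G`
  set Dset := {d : {f : ↥Z →* Φ' // Continuous f} // ∀ z : ↥Z, (z : G) ∈ E → d.1 z = 1}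
    with hDdef
  set ind : Dset → (G →* Γ) := fun d => fpInd P (fpExt Z E d.1.1 d.2) with hinddef
  have hindE : ∀ (d : Dset) (g : G), g ∈ E → ind d g = 1 := by
    intro d g hg
    have hgP : g ∈ P := Subgroup.mem_sup_right hg
    have hright : ((g : G ⧸ P)) = 1 := (QuotientGroup.eq_one_iff g).2 hgP
    refine SemidirectProduct.ext ?_ ?_
    · funext q
      show fpExt Z E d.1.1 d.2 ⟨fpIndElt P g q, fpIndElt_mem P g q⟩ = (1 : Γ).left q
      rw [SemidirectProduct.one_left]
      have harg : fpIndElt P g q = (Quotient.out q)⁻¹ * g * Quotient.out q := by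
        unfold fpIndElt
        rw [hright, inv_one, one_mul]
      rw [show (1 : (G ⧸ P) → Φ') q = 1 from rfl]
      apply fpExt_eq_one
      show fpIndElt P g q ∈ E
      rw [harg]
      exact Subgroup.Normal.conj_mem' ‹E.Normal› g hg _
    · show ((g : G ⧸ P)) = (1 : Γ).right
      rw [SemidirectProduct.one_right, hright]
  -- continuity of the induced homomorphism
  have hindCont : ∀ d : Dset, Continuous (ind d) := by
    intro d
    have hSopen : ∀ x : Φ',
        IsOpen {g : G | ∃ hg : g ∈ P, fpExt Z E d.1.1 d.2 ⟨g, hg⟩ = x} := by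
      intro x
      have heq : {g : G | ∃ hg : g ∈ P, fpExt Z E d.1.1 d.2 ⟨g, hg⟩ = x}
          = (Subtype.val '' ((fun z : ↥Z => d.1.1 z) ⁻¹' {x})) * (E : Set G) := by
        ext g
        constructor
        · rintro ⟨hg, hval⟩
          obtain ⟨z, e, he, hge⟩ := fpDecomp Z E g hg
          have : d.1.1 z = x := by
            rw [← hval, fpExt_spec d.1.1 d.2 ⟨g, hg⟩ z e he hge]
          exact ⟨↑z, ⟨z, by simpa using this, rfl⟩, e, he, hge.symm⟩
        · rintro ⟨v, ⟨z, hz, rfl⟩, e, he, rfl⟩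
          have hg : (z : G) * e ∈ P := P.mul_mem (Subgroup.mem_sup_left z.2)
            (Subgroup.mem_sup_right he)
          refine ⟨hg, ?_⟩
          rw [fpExt_spec d.1.1 d.2 ⟨(z : G) * e, hg⟩ z e he rfl]
          simpa using hz
      rw [heq]
      refine IsOpen.mul_right ?_
      exact (hZopen.isOpenMap_subtype_val) _
        ((isOpen_discrete {x}).preimage d.1.2)
    rw [continuous_discrete_rng]
    rintro ⟨F₀, q₀⟩
    have hcoset : IsOpen {g : G | ((g : G ⧸ P)) = q₀} := by
      have : {g : G | ((g : G ⧸ P)) = q₀} = (Quotient.out q₀) • (P : Set G) := by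
        ext g
        rw [Set.mem_smul_set_iff_inv_smul_mem, smul_eq_mul]
        show ((g : G ⧸ P)) = q₀ ↔ (Quotient.out q₀)⁻¹ * g ∈ P
        rw [← QuotientGroup.eq, QuotientGroup.out_eq']
        exact eq_comm
      rw [this]
      exact hPopen.smul _
    have hmain : ind d ⁻¹' {⟨F₀, q₀⟩} = {g : G | ((g : G ⧸ P)) = q₀} ∩
        ⋂ (q : G ⧸ P), {g : G | (Quotient.out q)⁻¹ * g * Quotient.out (q₀⁻¹ * q) ∈
          {g' : G | ∃ hg : g' ∈ P, fpExt Z E d.1.1 d.2 ⟨g', hg⟩ = F₀ q}} := by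
      ext g
      simp only [Set.mem_preimage, Set.mem_singleton_iff, Set.mem_inter_iff, Set.mem_iInter,
        Set.mem_setOf_eq]
      constructor
      · intro hg
        have hr : ((g : G ⧸ P)) = q₀ := congrArg SemidirectProduct.right hg
        refine ⟨hr, fun q => ?_⟩
        have hl : (ind d g).left q = F₀ q := congrFun (congrArg SemidirectProduct.left hg) q
        have harg : fpIndElt P g q = (Quotient.out q)⁻¹ * g * Quotient.out (q₀⁻¹ * q) := by
          unfold fpIndElt; rw [hr]
        refine ⟨by rw [← harg]; exact fpIndElt_mem P g q, ?_⟩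
        rw [← hl]
        show _ = fpExt Z E d.1.1 d.2 ⟨fpIndElt P g q, fpIndElt_mem P g q⟩
        congr 1
        exact Subtype.ext harg.symm
      · rintro ⟨hr, hq⟩
        refine SemidirectProduct.ext ?_ hr
        funext q
        obtain ⟨hmem, hval⟩ := hq q
        have harg : fpIndElt P g q = (Quotient.out q)⁻¹ * g * Quotient.out (q₀⁻¹ * q) := by
          unfold fpIndElt; rw [hr]
        show fpExt Z E d.1.1 d.2 ⟨fpIndElt P g q, fpIndElt_mem P g q⟩ = F₀ q
        rw [← hval]
        congr 1
        exact Subtype.ext harg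
    rw [hmain]
    refine IsOpen.inter hcoset (isOpen_iInter_of_finite fun q => ?_)
    have hcont : Continuous fun g : G =>
        (Quotient.out q)⁻¹ * g * Quotient.out (q₀⁻¹ * q) :=
      (continuous_mul_right _).comp (continuous_mul_left _)
    exact (hSopen (F₀ q)).preimage hcont
  -- inject into continuous homs from the quotient
  have hquot : ∀ d : Dset, E ≤ (ind d).ker := fun d g hg => by
    simpa [MonoidHom.mem_ker] using hindE d g hg
  set J : Dset → {f : G ⧸ E →* Γ // Continuous f} := fun d =>
    ⟨QuotientGroup.lift E (ind d) (hquot d), by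
      have hqm := QuotientGroup.isQuotientMap_mk E
      rw [hqm.continuous_iff]
      exact hindCont d⟩ with hJdef
  refine Finite.of_injective J ?_
  intro d₁ d₂ h
  have hev : ∀ g : G, ind d₁ g = ind d₂ g := by
    intro g
    have := congrArg (fun f : {f : G ⧸ E →* Γ // Continuous f} =>
      f.1 (QuotientGroup.mk g)) h
    simpa [hJdef, QuotientGroup.lift_mk'] using this
  refine Subtype.ext (Subtype.ext (MonoidHom.ext fun y => ?_))
  set a : G := Quotient.out (1 : G ⧸ P) with hadef
  have haP : a ∈ P := (QuotientGroup.eq_one_iff a).1 (QuotientGroup.out_eq' 1)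
  have hz : a * ↑y * a⁻¹ ∈ Z := Subgroup.Normal.conj_mem ‹Z.Normal› _ y.2 a
  have hzE : ((a * ↑y * a⁻¹ : G) : G ⧸ P) = 1 := (QuotientGroup.eq_one_iff _).2
    (Subgroup.mem_sup_left hz)
  have hl := congrFun (congrArg SemidirectProduct.left (hev (a * ↑y * a⁻¹))) (1 : G ⧸ P)
  have harg : fpIndElt P (a * ↑y * a⁻¹) (1 : G ⧸ P) = ↑y := by
    unfold fpIndElt
    rw [hzE, inv_one, one_mul, ← hadef]
    group
  have hyP : (y : G) ∈ P := Subgroup.mem_sup_left y.2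
  have key : ∀ d : Dset, (ind d (a * ↑y * a⁻¹)).left (1 : G ⧸ P) = d.1.1 y := by
    intro d
    show fpExt Z E d.1.1 d.2 ⟨fpIndElt P (a * ↑y * a⁻¹) 1, fpIndElt_mem P _ 1⟩ = d.1.1 y
    have : (⟨fpIndElt P (a * ↑y * a⁻¹) 1, fpIndElt_mem P _ 1⟩ : ↥P) = ⟨↑y, hyP⟩ :=
      Subtype.ext harg
    rw [this, fpExt_coe]
  rw [key d₁, key d₂] at hl
  exact hl

lemma fp_discreteTopology_quot (A : Type) [Group A] [TopologicalSpace A] [DiscreteTopology A]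
    (K : Subgroup A) : DiscreteTopology (A ⧸ K) := by
  rw [discreteTopology_iff_forall_isOpen]
  intro s
  have h := QuotientGroup.isQuotientMap_mk K
  rw [← h.isOpen_preimage]
  exact isOpen_discrete _

lemma fp_restrict_fiber_finite
    {G : Type} [Group G] [TopologicalSpace G] [IsTopologicalGroup G] [CompactSpace G]
    {Φ : Type} [Group Φ] [TopologicalSpace Φ] [DiscreteTopology Φ] [Finite Φ]
    (Z : Subgroup G) (hZopen : IsOpen (Z : Set G)) (ρ : ↥Z →* Φ) (hρ : Continuous ρ) :
    Finite {f : {f : G →* Φ // Continuous f} // ∀ z : ↥Z, f.1.1 z = ρ z} := by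
  classical
  set K : Subgroup G := ρ.ker.map Z.subtype with hK
  have hKopen : IsOpen (K : Set G) := by
    have hset : (K : Set G) = Subtype.val '' (ρ ⁻¹' {1}) := by
      ext g
      simp [hK, Subgroup.mem_map, MonoidHom.mem_ker, eq_comm]
    rw [hset]
    exact hZopen.isOpenMap_subtype_val _ ((isOpen_discrete ({1} : Set Φ)).preimage hρ)
  haveI : Finite (G ⧸ K) := K.quotient_finite_of_isOpen hKopen
  refine Finite.of_injective
    (fun f => (fun x : G ⧸ K => f.1.1 (Quotient.out x) : G ⧸ K → Φ)) ?_
  intro f₁ f₂ h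
  refine Subtype.ext (Subtype.ext (MonoidHom.ext fun g => ?_))
  have key : ∀ f : {f : {f : G →* Φ // Continuous f} // ∀ z : ↥Z, f.1.1 z = ρ z},
      f.1.1 g = f.1.1 (Quotient.out ((g : G ⧸ K))) := by
    intro f
    have hmem : g⁻¹ * Quotient.out ((g : G ⧸ K)) ∈ K := by
      rw [← QuotientGroup.eq]
      exact (QuotientGroup.out_eq' _).symm
    obtain ⟨z, hz, hzeq⟩ := hmem
    have h1 : f.1.1 (g⁻¹ * Quotient.out ((g : G ⧸ K))) = 1 := by
      have hzeq' : (z : G) = g⁻¹ * Quotient.out ((g : G ⧸ K)) := hzeq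
      have hz1 : ρ z = 1 := by simpa [MonoidHom.mem_ker] using hz
      rw [← hzeq']
      exact (f.2 z).trans hz1
    have : f.1.1 (Quotient.out ((g : G ⧸ K))) = f.1.1 g * f.1.1 (g⁻¹ * Quotient.out ((g : G ⧸ K))) := by
      rw [← map_mul]
      congr 1
      group
    rw [this, h1, mul_one]
  rw [key f₁, key f₂]
  exact congrFun h _

/-- Let `1 → E → G → H → 1` be an extension of profinite groups, i.e. `E` is
a closed normal subgroup of the profinite group `G` with quotient `H = G ⧸ E`, and let `p` be a
prime. If both `E` and `G ⧸ E` satisfy condition (F(p)), then so does `G`. -/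
theorem satisfiesFp_of_extension
    (p : ℕ) (hp : p.Prime)
    (G : Type) [Group G] [TopologicalSpace G] [IsTopologicalGroup G]
    [CompactSpace G] [T2Space G] [TotallyDisconnectedSpace G]
    (E : Subgroup G) [E.Normal] (hclosed : IsClosed (E : Set G))
    (hE : SatisfiesFp p E) (hQ : SatisfiesFp p (G ⧸ E)) :
    SatisfiesFp p G := by
  classical
  intro Φ _ _ _ _ hΦ
  haveI hEfin : Finite {f : ↥E →* Φ // Continuous f} := hE Φ hΦ
  set res : {f : G →* Φ // Continuous f} → {f : ↥E →* Φ // Continuous f} := fun f =>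
    ⟨f.1.comp E.subtype, f.2.comp continuous_subtype_val⟩ with hres
  suffices hfib : ∀ y : {f : ↥E →* Φ // Continuous f}, Finite {x // res x = y} by
    haveI := hfib
    exact Finite.of_equiv _ (Equiv.sigmaFiberEquiv res)
  intro φ
  rcases isEmpty_or_nonempty {x // res x = φ} with hcase | ⟨⟨f₀, hf₀⟩⟩
  · infer_instance
  -- all elements of the fiber agree with `φ` on `E`
  have hagree : ∀ (f : {f : G →* Φ // Continuous f}), res f = φ →
      ∀ e : G, ∀ he : e ∈ E, f.1 e = φ.1 ⟨e, he⟩ := by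
    intro f hf e he
    conv_rhs => rw [← hf]
    rfl
  -- the subgroup V = E ⊓ ker f₀
  set V : Subgroup G := E ⊓ f₀.1.ker with hV
  have hVE : ∀ v ∈ V, v ∈ E := fun v hv => hv.1
  have hVker : ∀ (f : {f : G →* Φ // Continuous f}), res f = φ → ∀ v ∈ V, f.1 v = 1 := by
    intro f hf v hv
    rw [hagree f hf v hv.1, ← hagree f₀ hf₀ v hv.1]
    exact hv.2
  haveI hVnormal : V.Normal := by
    constructor
    intro v hv g
    refine ⟨Subgroup.Normal.conj_mem ‹E.Normal› v hv.1 g, ?_⟩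
    have : f₀.1 (g * v * g⁻¹) = 1 := by
      have h2 : f₀.1 v = 1 := hv.2
      simp [map_mul, h2]
    exact this
  -- the subgroup Z of elements centralizing E modulo V
  set Z : Subgroup G :=
    { carrier := {g : G | ∀ e ∈ E, g * e * g⁻¹ * e⁻¹ ∈ V}
      one_mem' := by
        intro e he
        simpa using V.one_mem
      mul_mem' := by
        intro a b ha hb e he
        have h1 := hVnormal.conj_mem _ (hb e he) a
        have h2 := V.mul_mem h1 (ha e he)
        have heq : a * (b * e * b⁻¹ * e⁻¹) * a⁻¹ * (a * e * a⁻¹ * e⁻¹)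
            = a * b * e * (a * b)⁻¹ * e⁻¹ := by group
        rwa [heq] at h2
      inv_mem' := by
        intro a ha e he
        have he' : a⁻¹ * e * a ∈ E := by
          have := Subgroup.Normal.conj_mem' ‹E.Normal› e he a
          simpa [mul_assoc] using this
        have h1 := ha _ he'
        have h2 := V.inv_mem h1
        have heq : (a * (a⁻¹ * e * a) * a⁻¹ * (a⁻¹ * e * a)⁻¹)⁻¹
            = a⁻¹ * e * (a⁻¹)⁻¹ * e⁻¹ := by group
        rwa [heq] at h2 } with hZ
  have hZmem : ∀ g : G, g ∈ Z ↔ ∀ e ∈ E, g * e * g⁻¹ * e⁻¹ ∈ V := fun g => Iff.rfl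
  haveI hZnormal : Z.Normal := by
    constructor
    intro z hz g e he
    have he' : g⁻¹ * e * g ∈ E := by
      have := Subgroup.Normal.conj_mem' ‹E.Normal› e he g
      simpa [mul_assoc] using this
    have h1 := hVnormal.conj_mem _ (hz _ he') g
    have heq : g * (z * (g⁻¹ * e * g) * z⁻¹ * (g⁻¹ * e * g)⁻¹) * g⁻¹
        = g * z * g⁻¹ * e * (g * z * g⁻¹)⁻¹ * e⁻¹ := by group
    rwa [heq] at h1
  have hkerf₀Z : f₀.1.ker ≤ Z := by
    intro g hg e he
    have hg1 : f₀.1 g = 1 := hg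
    refine ⟨E.mul_mem (Subgroup.Normal.conj_mem ‹E.Normal› e he g) (E.inv_mem he), ?_⟩
    show f₀.1 (g * e * g⁻¹ * e⁻¹) = 1
    simp [map_mul, map_inv, hg1]
  have hZopen : IsOpen (Z : Set G) := by
    refine Subgroup.isOpen_mono hkerf₀Z ?_
    have : ((f₀.1.ker : Subgroup G) : Set G) = f₀.1 ⁻¹' {1} := by
      ext g; simp [MonoidHom.mem_ker]
    rw [this]
    exact (isOpen_discrete ({1} : Set Φ)).preimage f₀.2
  -- images
  set κ : Subgroup Φ := (Z ⊓ E).map f₀.1 with hκ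
  set L : Subgroup Φ := Subgroup.centralizer (κ : Set Φ) with hL
  have hcomm : ∀ (f : {f : G →* Φ // Continuous f}), res f = φ →
      ∀ z ∈ Z, ∀ c ∈ Z ⊓ E, f₀.1 c * f.1 z = f.1 z * f₀.1 c := by
    intro f hf z hz c hc
    have hcV : z * c * z⁻¹ * c⁻¹ ∈ V := hz c hc.2
    have h1 : f.1 (z * c * z⁻¹ * c⁻¹) = 1 := hVker f hf _ hcV
    have h2 : f.1 z * f.1 c * (f.1 z)⁻¹ * (f.1 c)⁻¹ = 1 := by
      simpa [map_mul, map_inv] using h1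
    have h3 : Commute (f.1 z) (f.1 c) := by
      rw [← commutatorElement_eq_one_iff_commute, commutatorElement_def]
      exact h2
    have hfc : f.1 c = f₀.1 c := by
      rw [hagree f hf c hc.2, hagree f₀ hf₀ c hc.2]
    rw [← hfc]
    exact h3.symm.eq
  have hmemL : ∀ (f : {f : G →* Φ // Continuous f}), res f = φ →
      ∀ z ∈ Z, f.1 z ∈ L := by
    intro f hf z hz
    rw [hL, Subgroup.mem_centralizer_iff]
    rintro x ⟨c, hc, rfl⟩
    exact hcomm f hf z hz c hc
  have hκL : κ ≤ L := by
    rintro x ⟨c, hc, rfl⟩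
    exact hmemL f₀ hf₀ c hc.1
  -- index of Z ⊔ E is prime to p
  have hPind : ¬ p ∣ Nat.card (G ⧸ (Z ⊔ E)) := by
    intro hdvd
    apply hΦ
    have hle : f₀.1.ker ≤ MonoidHom.ker (QuotientGroup.mk' (Z ⊔ E)) := by
      rw [QuotientGroup.ker_mk']
      exact hkerf₀Z.trans le_sup_left
    have hsurj : Function.Surjective
        (QuotientGroup.lift f₀.1.ker (QuotientGroup.mk' (Z ⊔ E)) hle) := by
      intro x
      obtain ⟨g, rfl⟩ := QuotientGroup.mk'_surjective (Z ⊔ E) x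
      exact ⟨QuotientGroup.mk g, by rw [QuotientGroup.lift_mk']⟩
    have h1 : Nat.card (G ⧸ (Z ⊔ E)) ∣ Nat.card (G ⧸ f₀.1.ker) :=
      Subgroup.card_dvd_of_surjective _ hsurj
    have h2 : Nat.card (G ⧸ f₀.1.ker) = Nat.card f₀.1.range :=
      Nat.card_congr (QuotientGroup.quotientKerEquivRange f₀.1).toEquiv
    have h3 := Subgroup.card_subgroup_dvd_card f₀.1.range
    exact hdvd.trans (h1.trans (h2 ▸ h3))
  -- dset finiteness for the two coefficient groups
  set κ' : Subgroup ↥L := κ.subgroupOf L with hκ'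
  haveI hκ'normal : κ'.Normal := by
    constructor
    intro n hn g
    rw [Subgroup.mem_subgroupOf] at hn ⊢
    have hcomm' : (n : Φ) * (g : Φ) = (g : Φ) * n :=
      (Subgroup.mem_centralizer_iff.mp g.2) _ hn
    have hval : ((g * n * g⁻¹ : ↥L) : Φ) = (n : Φ) := by
      push_cast
      rw [← hcomm', mul_assoc]
      simp
    rw [hval]
    exact hn
  haveI : DiscreteTopology (↥L ⧸ κ') := fp_discreteTopology_quot ↥L κ'
  have hκcard : ¬ p ∣ Nat.card ↥κ := fun h => hΦ (h.trans κ.card_subgroup_dvd_card)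
  have hLbarcard : ¬ p ∣ Nat.card (↥L ⧸ κ') := fun h =>
    hΦ ((h.trans (Subgroup.card_quotient_dvd_card κ')).trans L.card_subgroup_dvd_card)
  haveI hDκ : Finite {d : {f : ↥Z →* ↥κ // Continuous f} //
      ∀ z : ↥Z, (z : G) ∈ E → d.1 z = 1} :=
    fp_dset_finite p hp E hQ Z hZopen hPind ↥κ hκcard
  haveI hDL : Finite {d : {f : ↥Z →* (↥L ⧸ κ') // Continuous f} //
      ∀ z : ↥Z, (z : G) ∈ E → d.1 z = 1} :=
    fp_dset_finite p hp E hQ Z hZopen hPind (↥L ⧸ κ') hLbarcard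
  -- the set T of candidate restrictions to Z
  set T := {ψ : {f : ↥Z →* Φ // Continuous f} //
      (∀ z : ↥Z, (z : G) ∈ E → ψ.1 z = f₀.1 z) ∧ (∀ z : ↥Z, ψ.1 z ∈ L)} with hT
  haveI hTfin : Finite T := by
    set Map₂ : T → {d : {f : ↥Z →* (↥L ⧸ κ') // Continuous f} //
        ∀ z : ↥Z, (z : G) ∈ E → d.1 z = 1} := fun ψ =>
      ⟨⟨(QuotientGroup.mk' κ').comp ((ψ.1.1).codRestrict L (fun z => ψ.2.2 z)), by
        show Continuous fun z : ↥Z =>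
          (QuotientGroup.mk (⟨ψ.1.1 z, ψ.2.2 z⟩ : ↥L) : ↥L ⧸ κ')
        exact continuous_quot_mk.comp (Continuous.subtype_mk ψ.1.2 _)⟩, by
        intro z hz
        show QuotientGroup.mk _ = 1
        rw [QuotientGroup.eq_one_iff]
        rw [Subgroup.mem_subgroupOf]
        show ψ.1.1 z ∈ κ
        rw [ψ.2.1 z hz]
        exact ⟨z, ⟨z.2, hz⟩, rfl⟩⟩ with hMap₂
    have hfibT : ∀ χ, Finite {ψ : T // Map₂ ψ = χ} := by
      intro χ
      rcases isEmpty_or_nonempty {ψ : T // Map₂ ψ = χ} with h | ⟨⟨ψ₀, hψ₀⟩⟩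
      · infer_instance
      have hδmem : ∀ (ψ : T), Map₂ ψ = χ → ∀ z : ↥Z, (ψ.1.1 z)⁻¹ * ψ₀.1.1 z ∈ κ := by
        intro ψ hψ z
        have h1 : (Map₂ ψ).1.1 z = (Map₂ ψ₀).1.1 z := by rw [hψ, hψ₀]
        have h2 : (QuotientGroup.mk (⟨ψ.1.1 z, ψ.2.2 z⟩ : ↥L) : ↥L ⧸ κ')
            = QuotientGroup.mk (⟨ψ₀.1.1 z, ψ₀.2.2 z⟩ : ↥L) := h1
        have h3 := QuotientGroup.eq.mp h2
        rw [Subgroup.mem_subgroupOf] at h3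
        exact h3
      refine Finite.of_injective (fun ψ =>
        (⟨⟨MonoidHom.mk' (fun z => (⟨(ψ.1.1.1 z)⁻¹ * ψ₀.1.1 z, hδmem ψ.1 ψ.2 z⟩ : ↥κ))
          (by
            intro z w
            refine Subtype.ext ?_
            show (ψ.1.1.1 (z * w))⁻¹ * ψ₀.1.1 (z * w)
              = (ψ.1.1.1 z)⁻¹ * ψ₀.1.1 z * ((ψ.1.1.1 w)⁻¹ * ψ₀.1.1 w)
            rw [map_mul, map_mul, mul_inv_rev]
            have hcom : (ψ.1.1.1 z)⁻¹ * ψ₀.1.1 z * (ψ.1.1.1 w)⁻¹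
                = (ψ.1.1.1 w)⁻¹ * ((ψ.1.1.1 z)⁻¹ * ψ₀.1.1 z) := by
              have hLmem : (ψ.1.1.1 w)⁻¹ ∈ L := L.inv_mem (ψ.1.2.2 w)
              exact (Subgroup.mem_centralizer_iff.mp hLmem) _ (hδmem ψ.1 ψ.2 z)
            calc (ψ.1.1.1 w)⁻¹ * (ψ.1.1.1 z)⁻¹ * (ψ₀.1.1 z * ψ₀.1.1 w)
                = (ψ.1.1.1 w)⁻¹ * ((ψ.1.1.1 z)⁻¹ * ψ₀.1.1 z) * ψ₀.1.1 w := by group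
              _ = (ψ.1.1.1 z)⁻¹ * ψ₀.1.1 z * (ψ.1.1.1 w)⁻¹ * ψ₀.1.1 w := by rw [← hcom]
              _ = (ψ.1.1.1 z)⁻¹ * ψ₀.1.1 z * ((ψ.1.1.1 w)⁻¹ * ψ₀.1.1 w) := by
                  rw [mul_assoc]), by
          refine Continuous.subtype_mk ?_ _
          have hcc : Continuous ((fun pr : Φ × Φ => pr.1⁻¹ * pr.2) ∘
              (fun z : ↥Z => (ψ.1.1.1 z, ψ₀.1.1 z))) :=
            continuous_of_discreteTopology.comp ((ψ.1.1.2).prodMk ψ₀.1.2)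
          exact hcc⟩, by
          intro z hz
          refine Subtype.ext ?_
          show (ψ.1.1.1 z)⁻¹ * ψ₀.1.1 z = 1
          rw [ψ.1.2.1 z hz, ψ₀.2.1 z hz]
          exact inv_mul_cancel _⟩ :
        {d : {f : ↥Z →* ↥κ // Continuous f} // ∀ z : ↥Z, (z : G) ∈ E → d.1 z = 1})) ?_
      intro ψ₁ ψ₂ h
      refine Subtype.ext (Subtype.ext (Subtype.ext (MonoidHom.ext fun z => ?_)))
      have h1 := congrArg (fun d : {d : {f : ↥Z →* ↥κ // Continuous f} //
          ∀ z : ↥Z, (z : G) ∈ E → d.1 z = 1} => ((d.1.1 z : ↥κ) : Φ)) h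
      have h2 : (ψ₁.1.1.1 z)⁻¹ * ψ₀.1.1 z = (ψ₂.1.1.1 z)⁻¹ * ψ₀.1.1 z := h1
      have h3 := mul_right_cancel h2
      exact inv_injective h3
    haveI := hfibT
    exact Finite.of_equiv _ (Equiv.sigmaFiberEquiv Map₂)
  -- finally, the fiber over φ
  set Map₁ : {x // res x = φ} → T := fun f =>
    ⟨⟨f.1.1.comp Z.subtype, f.1.2.comp continuous_subtype_val⟩,
      ⟨fun z hz => by
        show f.1.1 z = f₀.1 z
        rw [hagree f.1 f.2 z hz, hagree f₀ hf₀ z hz],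
       fun z => hmemL f.1 f.2 z z.2⟩⟩ with hMap₁
  have hfib₁ : ∀ ψ : T, Finite {x // Map₁ x = ψ} := by
    intro ψ
    haveI := fp_restrict_fiber_finite Z hZopen ψ.1.1 ψ.1.2
    refine Finite.of_injective (fun x =>
      (⟨x.1.1, fun z => by
          have h1 := congrArg (fun t : T => t.1.1 z) x.2
          exact h1⟩ :
        {f : {f : G →* Φ // Continuous f} // ∀ z : ↥Z, f.1.1 z = ψ.1.1 z})) ?_
    intro x₁ x₂ h
    have h' : x₁.1.1 = x₂.1.1 := congrArg
      (fun t : {f : {f : G →* Φ // Continuous f} // ∀ z : ↥Z, f.1.1 z = ψ.1.1 z} => t.1) h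
    exact Subtype.ext (Subtype.ext h')
  haveI := hfib₁
  exact Finite.of_equiv _ (Equiv.sigmaFiberEquiv Map₁)
end
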